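/- Let G be a finitely generated group acting by isometries on a simplicial tree T with a free cocompact action on an invariant subtree T_G, and suppose there is a constant D such that for every member T_u of a given family 𝒯 of subtrees of T, diam(T_G ∩ T_u) ≤ D. Suppose moreover that for points u in a connected graph 𝒞 with a G-action, there is a G-equivariant assignment u ↦ T_u ∈ 𝒯 such that whenever u, u' are adjacent in 𝒞, T_u ∩ T_{u'} ≠ ∅ (via the subtree of the pair), and a basepoint t ∈ T_G lies in T_{u₀} for a basepoint u₀ with G·t coarsely equal to T_G. Then the orbit map G → 𝒞, g ↦ g·u₀, is a quasi-isometric embedding. -/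

import Mathlib

def IsSubtree {V : Type*} (T : SimpleGraph V) (S : Set V) : Prop :=
  S.Nonempty ∧ ∀ ⦃u v : V⦄, u ∈ S → v ∈ S →
    ∀ (p : T.Walk u v), p.IsPath → ∀ w ∈ p.support, w ∈ S

/-- Word length of `g` with respect to a symmetrized generating set `S`. -/
noncomputable def wordLength {G : Type*} [Group G] (S : Finset G) (g : G) : ℕ :=
  sInf {n : ℕ | ∃ l : List G, (∀ x ∈ l, x ∈ S ∨ x⁻¹ ∈ S) ∧ l.prod = g ∧ l.length = n}

open SimpleGraph

/-! ### Auxiliary lemmas -/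

lemma aux_walk_getVert {V : Type*} {T : SimpleGraph V} :
    ∀ {u v : V} (w : T.Walk u v) (j k : ℕ), j ≤ k → k ≤ w.length →
      ∃ p : T.Walk (w.getVert j) (w.getVert k), p.length = k - j := by
  intro u v w
  induction w with
  | nil =>
    intro j k hjk hk
    simp only [Walk.length_nil, Nat.le_zero] at hk
    subst hk
    interval_cases j
    exact ⟨Walk.nil, by simp⟩
  | cons h w ih =>
    intro j k hjk hk
    rcases Nat.eq_or_lt_of_le hjk with rfl | hlt
    · exact ⟨Walk.nil, by simp⟩
    match j, k with
    | 0, (k+1) =>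
      obtain ⟨p, hp⟩ := ih 0 k (Nat.zero_le _) (by simpa [Walk.length_cons] using hk)
      refine ⟨(Walk.cons h (p.copy (Walk.getVert_zero w) rfl)).copy
        (Walk.getVert_zero _).symm rfl, ?_⟩
      simp [hp]
    | (j+1), (k+1) =>
      obtain ⟨p, hp⟩ := ih j k (by omega) (by simpa [Walk.length_cons] using hk)
      exact ⟨(p.copy (by simp) (by simp)), by simp [hp]⟩

lemma aux_dist_getVert {V : Type*} {T : SimpleGraph V} {u v : V} (w : T.Walk u v)
    (j k : ℕ) (hjk : j ≤ k) (hk : k ≤ w.length) :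
    T.dist (w.getVert j) (w.getVert k) ≤ k - j := by
  obtain ⟨p, hp⟩ := aux_walk_getVert w j k hjk hk
  simpa [hp] using SimpleGraph.dist_le p

/-- In a tree, every path realizes the distance. -/
lemma aux_path_length_eq_dist {V : Type*} {T : SimpleGraph V} (hT : T.IsTree)
    {x y : V} (p : T.Walk x y) (hp : p.IsPath) : p.length = T.dist x y := by
  classical
  obtain ⟨w, hw⟩ := hT.isConnected.exists_walk_length_eq_dist x y
  have h2 : (⟨p, hp⟩ : T.Path x y) = ⟨w.bypass, w.bypass_isPath⟩ :=
    hT.IsAcyclic.path_unique _ _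
  have h3 : p.length = w.bypass.length := by
    have := congrArg (fun q : T.Path x y => q.1.length) h2
    simpa using this
  have h4 := w.length_bypass_le
  have h5 := SimpleGraph.dist_le p
  omega

lemma aux_dist_smul {G V : Type*} [Group G] [MulAction G V] (T : SimpleGraph V)
    (hconn : T.Connected) (hact : ∀ (g : G) (u v : V), T.Adj u v → T.Adj (g • u) (g • v))
    (g : G) (x y : V) : T.dist (g • x) (g • y) = T.dist x y := by
  have key : ∀ (h : G) (x y : V), T.dist (h • x) (h • y) ≤ T.dist x y := by
    intro h x y
    obtain ⟨w, hw⟩ := hconn.exists_walk_length_eq_dist x y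
    let f : T →g T := ⟨fun v => h • v, fun a => hact h _ _ a⟩
    have := SimpleGraph.dist_le (w.map f)
    rw [Walk.length_map, hw] at this
    exact this
  refine le_antisymm (key g x y) ?_
  have := key g⁻¹ (g • x) (g • y)
  simpa [inv_smul_smul] using this

lemma aux_count {α : Type*} [DecidableEq α] (f : ℕ → α) (s : Finset α) (L Dd : ℕ)
    (hmem : ∀ j ≤ L, f j ∈ s)
    (hfib : ∀ j k, j ≤ k → k ≤ L → f j = f k → k - j ≤ Dd) :
    L + 1 ≤ s.card * (Dd + 1) := by
  have hcard := Finset.card_eq_sum_card_fiberwise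
    (f := f) (s := Finset.range (L+1)) (t := s)
    (fun a ha => hmem a (by simpa using Nat.lt_succ_iff.mp (Finset.mem_range.mp ha)))
  rw [Finset.card_range] at hcard
  have hbound : ∀ w ∈ s, ((Finset.range (L+1)).filter (fun j => f j = w)).card ≤ Dd + 1 := by
    intro w _
    set fib := (Finset.range (L+1)).filter (fun j => f j = w) with hfibdef
    rcases fib.eq_empty_or_nonempty with he | hne
    · simp [he]
    · have hsub : fib ⊆ Finset.Icc (fib.min' hne) (fib.min' hne + Dd) := by
        intro j hj
        have hmin := fib.min'_le j hj
        have hjmem := Finset.mem_filter.mp hj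
        have hjrange := Finset.mem_range.mp hjmem.1
        have hminmem := Finset.mem_filter.mp (fib.min'_mem hne)
        have := hfib (fib.min' hne) j hmin (by omega) (by rw [hminmem.2, hjmem.2])
        rw [Finset.mem_Icc]
        omega
      calc fib.card ≤ _ := Finset.card_le_card hsub
        _ ≤ Dd + 1 := by rw [Nat.card_Icc]; omega
  calc L + 1 = _ := hcard
    _ ≤ ∑ _w ∈ s, (Dd + 1) := Finset.sum_le_sum hbound
    _ = s.card * (Dd + 1) := by rw [Finset.sum_const, smul_eq_mul]

lemma aux_telescope {G : Type*} [Group G] (f : ℕ → G) :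
    ∀ L, ((List.range L).map (fun j => (f j)⁻¹ * f (j+1))).prod = (f 0)⁻¹ * f L := by
  intro L
  induction L with
  | zero => simp
  | succ L ih => rw [List.range_succ, List.map_append, List.prod_append, ih]; simp [mul_assoc]

section WL
variable {G : Type*} [Group G] (S : Finset G)

lemma wl_nonempty (hgen : Subgroup.closure (S : Set G) = ⊤) (g : G) :
    {n : ℕ | ∃ l : List G, (∀ x ∈ l, x ∈ S ∨ x⁻¹ ∈ S) ∧ l.prod = g ∧ l.length = n}.Nonempty := by
  have hg : g ∈ Subgroup.closure (S : Set G) := by rw [hgen]; trivial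
  rw [← Subgroup.mem_toSubmonoid, Subgroup.closure_toSubmonoid] at hg
  obtain ⟨l, hl, rfl⟩ := Submonoid.exists_list_of_mem_closure hg
  exact ⟨l.length, l, fun y hy => by simpa using hl y hy, rfl, rfl⟩

lemma wl_spec (hgen : Subgroup.closure (S : Set G) = ⊤) (g : G) :
    ∃ l : List G, (∀ x ∈ l, x ∈ S ∨ x⁻¹ ∈ S) ∧ l.prod = g ∧ l.length = wordLength S g :=
  Nat.sInf_mem (wl_nonempty S hgen g)

lemma wl_le (l : List G) (hl : ∀ x ∈ l, x ∈ S ∨ x⁻¹ ∈ S) :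
    wordLength S l.prod ≤ l.length :=
  Nat.sInf_le ⟨l, hl, rfl, rfl⟩

lemma wl_one : wordLength S 1 = 0 :=
  Nat.le_zero.mp (by simpa using wl_le S [] (by simp))

lemma wl_mul (hgen : Subgroup.closure (S : Set G) = ⊤) (a b : G) :
    wordLength S (a * b) ≤ wordLength S a + wordLength S b := by
  obtain ⟨la, hla, hpa, hlena⟩ := wl_spec S hgen a
  obtain ⟨lb, hlb, hpb, hlenb⟩ := wl_spec S hgen b
  have := wl_le S (la ++ lb) (by intro x hx; rcases List.mem_append.mp hx with h | h
                                 exacts [hla x h, hlb x h])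
  rw [List.prod_append, hpa, hpb] at this
  simpa [hlena, hlenb] using this

lemma wl_prod_le (hgen : Subgroup.closure (S : Set G) = ⊤) (l : List G) :
    wordLength S l.prod ≤ (l.map (wordLength S)).sum := by
  induction l with
  | nil => simp [wl_one]
  | cons a l ih =>
    rw [List.prod_cons, List.map_cons, List.sum_cons]
    exact le_trans (wl_mul S hgen a l.prod) (by omega)
end WL

/-! ### Reachability along a set of allowed edges -/

def reachSet {V : Type*} (EY : Set (Sym2 V)) (t : V) : ℕ → Set V
  | 0 => {t}
  | (n+1) => reachSet EY t n ∪ {w | ∃ v ∈ reachSet EY t n, s(v, w) ∈ EY}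

lemma reach_mono {V : Type*} (EY : Set (Sym2 V)) (t : V) :
    ∀ {m n : ℕ}, m ≤ n → reachSet EY t m ⊆ reachSet EY t n := by
  intro m n h
  induction n with
  | zero => simp only [Nat.le_zero] at h; subst h; exact subset_rfl
  | succ n ih =>
    rcases Nat.eq_or_lt_of_le h with rfl | hlt
    · exact subset_rfl
    · exact (ih (by omega)).trans (Set.subset_union_left)

lemma reach_finite {V : Type*} (EY : Set (Sym2 V)) (t : V)
    (hnbr : ∀ v : V, {w | s(v, w) ∈ EY}.Finite) :
    ∀ n, (reachSet EY t n).Finite := by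
  intro n
  induction n with
  | zero => exact Set.finite_singleton t
  | succ n ih =>
    refine ih.union (Set.Finite.subset (Set.Finite.biUnion ih (fun v _ => hnbr v)) ?_)
    intro w hw
    obtain ⟨v, hv, he⟩ := hw
    exact Set.mem_biUnion hv he

lemma reach_walk {V : Type*} {T : SimpleGraph V} (EY : Set (Sym2 V)) (t : V) :
    ∀ {x y : V} (w : T.Walk x y) (n : ℕ), x ∈ reachSet EY t n →
      (∀ e ∈ w.edges, e ∈ EY) → y ∈ reachSet EY t (n + w.length) := by
  intro x y w
  induction w with
  | nil => intro n hx _; simpa using hx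
  | cons h w ih =>
    intro n hx he
    rename_i u v z
    have hstep : v ∈ reachSet EY t (n + 1) :=
      Or.inr ⟨u, hx, he _ (by simp [Walk.edges_cons])⟩
    have := ih (n+1) hstep (fun e heh => he e (by simp [Walk.edges_cons, heh]))
    have harith : n + 1 + w.length = n + (Walk.cons h w).length := by
      simp [Walk.length_cons]; omega
    rwa [harith] at this

theorem stmt15 {G V C : Type*} [Group G] [MulAction G V] [MulAction G C]
    (T : SimpleGraph V) (hT : T.IsTree)
    (hactT : ∀ (g : G) (u v : V), T.Adj u v → T.Adj (g • u) (g • v))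
    (𝒞 : SimpleGraph C) (h𝒞conn : 𝒞.Connected)
    (hact𝒞 : ∀ (g : G) (u v : C), 𝒞.Adj u v → 𝒞.Adj (g • u) (g • v))
    (TG : Set V) (hTG : IsSubtree T TG)
    (hTGinv : ∀ g : G, (g • ·) '' TG = TG)
    (hfree : ∀ (g : G) (v : V), v ∈ TG → g • v = v → g = 1)
    (F : Finset V) (hcocpt : ∀ v ∈ TG, ∃ g : G, g • v ∈ F)
    (Tmap : C → Set V) (hTsub : ∀ u : C, IsSubtree T (Tmap u))
    (hequiv : ∀ (g : G) (u : C), Tmap (g • u) = (g • ·) '' Tmap u)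
    (D : ℕ)
    (hD : ∀ u : C, ∀ x ∈ TG ∩ Tmap u, ∀ y ∈ TG ∩ Tmap u, T.dist x y ≤ D)
    (hadj : ∀ u u' : C, 𝒞.Adj u u' → (Tmap u ∩ Tmap u').Nonempty)
    (u₀ : C) (t : V) (ht : t ∈ TG ∩ Tmap u₀)
    (R : ℕ) (hcoarse : ∀ x ∈ TG, ∃ g : G, T.dist x (g • t) ≤ R)
    (S : Finset G) (hgen : Subgroup.closure (S : Set G) = ⊤) :
    ∃ K c : ℝ, 0 < K ∧ 0 ≤ c ∧ ∀ g : G,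
      (wordLength S g : ℝ) ≤ K * (𝒞.dist u₀ (g • u₀) : ℝ) + c ∧
      (𝒞.dist u₀ (g • u₀) : ℝ) ≤ K * (wordLength S g : ℝ) + c := by
  classical
  obtain ⟨htTG, htT0⟩ := ht
  -- basic facts about the actions
  have hTGmem : ∀ (g : G) (v : V), v ∈ TG → g • v ∈ TG := by
    intro g v hv; rw [← hTGinv g]; exact ⟨v, hv, rfl⟩
  have hdistT : ∀ (g : G) (x y : V), T.dist (g • x) (g • y) = T.dist x y :=
    aux_dist_smul T hT.isConnected hactT
  have hdistC : ∀ (g : G) (x y : C), 𝒞.dist (g • x) (g • y) = 𝒞.dist x y :=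
    aux_dist_smul 𝒞 h𝒞conn hact𝒞
  have hfree' : ∀ (g g' : G) (v : V), v ∈ TG → g • v = g' • v → g = g' := by
    intro g g' v hv hgg
    have h1 : (g'⁻¹ * g) • v = v := by rw [mul_smul, hgg, inv_smul_smul]
    have h2 := hfree _ v hv h1
    exact (inv_mul_eq_one.mp h2).symm
  -- paths inside subtrees
  have hPathIn : ∀ (A : Set V), IsSubtree T A → ∀ x y : V, x ∈ A → y ∈ A →
      ∃ P : T.Walk x y, P.IsPath ∧ ∀ z ∈ P.support, z ∈ A := by
    intro A hA x y hx hy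
    obtain ⟨w, -⟩ := hT.isConnected.exists_walk_length_eq_dist x y
    exact ⟨w.bypass, w.bypass_isPath,
      fun z hz => hA.2 hx hy w.bypass w.bypass_isPath z hz⟩
  -- a walk in T tracking a walk in 𝒞
  have hwalkex : ∀ {a b : C} (q : 𝒞.Walk a b) (x y : V), x ∈ Tmap a → y ∈ Tmap b →
      ∃ W : T.Walk x y, ∀ z ∈ W.support, ∃ w ∈ q.support, z ∈ Tmap w := by
    intro a b q
    induction q with
    | nil =>
      intro x y hx hy
      rename_i a
      obtain ⟨P, hP, hPA⟩ := hPathIn _ (hTsub a) x y hx hy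
      exact ⟨P, fun z hz => ⟨a, by simp, hPA z hz⟩⟩
    | cons hadj' q ih =>
      rename_i a a' b
      intro x y hx hy
      obtain ⟨p, hp1, hp2⟩ := hadj _ _ hadj'
      obtain ⟨P, hP, hPA⟩ := hPathIn _ (hTsub a) x p hx hp1
      obtain ⟨W', hW'⟩ := ih p y hp2 hy
      refine ⟨P.append W', ?_⟩
      intro z hz
      rcases (Walk.mem_support_append_iff P W').mp hz with hz | hz
      · exact ⟨a, by simp, hPA z hz⟩
      · obtain ⟨w, hw1, hw2⟩ := hW' z hz
        exact ⟨w, by simp [Walk.support_cons, hw1], hw2⟩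
  -- the key geodesic-length bound
  have hLbound : ∀ g : G, T.dist t (g • t) + 1 ≤ (𝒞.dist u₀ (g • u₀) + 1) * (D + 1) := by
    intro g
    have hgt_TG : g • t ∈ TG := hTGmem g t htTG
    have hgt_Tm : g • t ∈ Tmap (g • u₀) := by rw [hequiv]; exact ⟨t, htT0, rfl⟩
    obtain ⟨q, hq⟩ := h𝒞conn.exists_walk_length_eq_dist u₀ (g • u₀)
    obtain ⟨W, hW⟩ := hwalkex q t (g • t) htT0 hgt_Tm
    set γ := W.bypass with hγdef
    have hγpath : γ.IsPath := W.bypass_isPath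
    have hγlen : γ.length = T.dist t (g • t) := aux_path_length_eq_dist hT γ hγpath
    have hγTG : ∀ z ∈ γ.support, z ∈ TG := fun z hz => hTG.2 htTG hgt_TG γ hγpath z hz
    set L := γ.length with hLdef
    have hch : ∀ j ≤ L, ∃ w ∈ q.support, γ.getVert j ∈ Tmap w := fun j hj =>
      hW _ (W.support_bypass_subset
        (Walk.mem_support_iff_exists_getVert.mpr ⟨j, rfl, hj⟩))
    set f : ℕ → C := fun j =>
      if h : ∃ w ∈ q.support, γ.getVert j ∈ Tmap w then h.choose else u₀ with hfdef
    have hfmem : ∀ j ≤ L, f j ∈ q.support.toFinset ∧ γ.getVert j ∈ Tmap (f j) := by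
      intro j hj
      have h := hch j hj
      rw [hfdef]
      simp only [dif_pos h]
      obtain ⟨hw1, hw2⟩ := h.choose_spec
      exact ⟨List.mem_toFinset.mpr hw1, hw2⟩
    have hcount : L + 1 ≤ q.support.toFinset.card * (D + 1) := by
      refine aux_count f q.support.toFinset L D (fun j hj => (hfmem j hj).1) ?_
      intro j k hjk hkL hfeq
      have hjL := le_trans hjk hkL
      have hjTG : γ.getVert j ∈ TG :=
        hγTG _ (Walk.mem_support_iff_exists_getVert.mpr ⟨j, rfl, hjL⟩)
      have hkTG : γ.getVert k ∈ TG :=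
        hγTG _ (Walk.mem_support_iff_exists_getVert.mpr ⟨k, rfl, hkL⟩)
      have hdle : T.dist (γ.getVert j) (γ.getVert k) ≤ D :=
        hD (f j) _ ⟨hjTG, (hfmem j hjL).2⟩ _ ⟨hkTG, hfeq ▸ (hfmem k hkL).2⟩
      have h1 : T.dist t (γ.getVert j) ≤ j := by
        have := aux_dist_getVert γ 0 j (Nat.zero_le _) hjL
        simpa [Walk.getVert_zero] using this
      have h2 : T.dist (γ.getVert k) (g • t) ≤ L - k := by
        have := aux_dist_getVert γ k L hkL le_rfl
        simpa [hLdef, Walk.getVert_length] using this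
      have h3 := hT.isConnected.dist_triangle (u := t) (v := γ.getVert j) (w := g • t)
      have h4 := hT.isConnected.dist_triangle (u := γ.getVert j) (v := γ.getVert k)
        (w := g • t)
      omega
    have hcard2 : q.support.toFinset.card ≤ q.length + 1 := by
      have := q.support.toFinset_card_le
      rw [Walk.length_support] at this
      exact this
    calc T.dist t (g • t) + 1 = L + 1 := by rw [hγlen]
      _ ≤ q.support.toFinset.card * (D + 1) := hcount
      _ ≤ (q.length + 1) * (D + 1) := Nat.mul_le_mul_right _ hcard2
      _ = (𝒞.dist u₀ (g • u₀) + 1) * (D + 1) := by rw [hq]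
  -- the finite-ball machinery
  have hPs : ∀ s : G, ∃ P : T.Walk t (s • t), P.IsPath ∧ ∀ z ∈ P.support, z ∈ TG :=
    fun s => hPathIn TG hTG t (s • t) htTG (hTGmem s t htTG)
  choose Ps hPsPath hPsTG using hPs
  set E₀ : Set (Sym2 V) := ⋃ s ∈ (S : Set G), {e | e ∈ (Ps s).edges} with hE₀def
  have hE₀fin : E₀.Finite :=
    Set.Finite.biUnion S.finite_toSet (fun s _ => (Ps s).edges.finite_toSet)
  have hE₀TG : ∀ a b : V, s(a, b) ∈ E₀ → a ∈ TG ∧ b ∈ TG := by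
    intro a b he
    rw [hE₀def] at he
    simp only [Set.mem_iUnion, Set.mem_setOf_eq] at he
    obtain ⟨s, hs, he⟩ := he
    exact ⟨hPsTG s a ((Ps s).fst_mem_support_of_mem_edges he),
      hPsTG s b ((Ps s).snd_mem_support_of_mem_edges he)⟩
  set EY : Set (Sym2 V) := {e | ∃ g : G, Sym2.map (fun z => g • z) e ∈ E₀} with hEYdef
  have hone : (fun z : V => (1 : G) • z) = id := funext fun z => one_smul G z
  have hE₀EY : E₀ ⊆ EY := by
    intro e he
    exact ⟨1, by rw [hone, Sym2.map_id, id]; exact he⟩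
  have hEYinv : ∀ (x : G) (e : Sym2 V), e ∈ EY → Sym2.map (fun z => x • z) e ∈ EY := by
    intro x e he
    obtain ⟨g, hg⟩ := he
    refine ⟨g * x⁻¹, ?_⟩
    rw [Sym2.map_map]
    have hcomp : ((fun z : V => (g * x⁻¹) • z) ∘ fun z : V => x • z) = fun z : V => g • z := by
      funext z
      simp only [Function.comp_apply, smul_smul, inv_mul_cancel_right]
    rw [hcomp]
    exact hg
  have hnbr : ∀ v : V, {w | s(v, w) ∈ EY}.Finite := by
    intro v
    have hsub : {w | s(v, w) ∈ EY} ⊆ ⋃ e₀ ∈ E₀, {w | ∃ g : G, s(g • v, g • w) = e₀} := by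
      intro w hw
      obtain ⟨g, hg⟩ := hw
      rw [Sym2.map_pair_eq] at hg
      exact Set.mem_biUnion hg ⟨g, rfl⟩
    refine Set.Finite.subset (Set.Finite.biUnion hE₀fin ?_) hsub
    intro e₀ he₀
    induction e₀ using Sym2.ind with
    | _ a b =>
    obtain ⟨haTG, hbTG⟩ := hE₀TG a b he₀
    have hsub2 : {w | ∃ g : G, s(g • v, g • w) = s(a, b)} ⊆
        {w | ∃ g : G, g • v = a ∧ g • w = b} ∪ {w | ∃ g : G, g • v = b ∧ g • w = a} := by
      intro w hw
      obtain ⟨g, hg⟩ := hw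
      rcases Sym2.eq_iff.mp hg with ⟨h1, h2⟩ | ⟨h1, h2⟩
      exacts [Or.inl ⟨g, h1, h2⟩, Or.inr ⟨g, h1, h2⟩]
    have hsing : ∀ (a b : V), a ∈ TG → {w | ∃ g : G, g • v = a ∧ g • w = b}.Subsingleton := by
      intro a b haTG w₁ hw₁ w₂ hw₂
      obtain ⟨g₁, hg₁v, hg₁w⟩ := hw₁
      obtain ⟨g₂, hg₂v, hg₂w⟩ := hw₂
      have hvTG : v ∈ TG := by
        have : v = g₁⁻¹ • a := by rw [← hg₁v, inv_smul_smul]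
        rw [this]
        exact hTGmem g₁⁻¹ a haTG
      have hgg : g₁ = g₂ := hfree' g₁ g₂ v hvTG (hg₁v.trans hg₂v.symm)
      have : g₁ • w₁ = g₁ • w₂ := by rw [hg₁w, hgg, hg₂w]
      exact smul_left_cancel g₁ this
    exact Set.Finite.subset (Set.Finite.union ((hsing a b haTG).finite)
      ((hsing b a hbTG).finite)) hsub2
  -- words give walks with controlled edges
  have hwordwalk : ∀ l : List G, (∀ x ∈ l, x ∈ S ∨ x⁻¹ ∈ S) →
      ∃ w : T.Walk t (l.prod • t), ∀ e ∈ w.edges, e ∈ EY := by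
    intro l hl
    induction l with
    | nil =>
      refine ⟨Walk.nil.copy rfl (by rw [List.prod_nil, one_smul]), ?_⟩
      intro e he; rw [Walk.edges_copy] at he; simp at he
    | cons x l' ih =>
      obtain ⟨w', hw'⟩ := ih (fun y hy => hl y (List.mem_cons_of_mem _ hy))
      have hx := hl x List.mem_cons_self
      let fx : T →g T := ⟨fun z => x • z, fun a => hactT x _ _ a⟩
      obtain ⟨w₁, hw₁⟩ : ∃ w₁ : T.Walk t (x • t), ∀ e ∈ w₁.edges, e ∈ EY := by
        rcases hx with hxS | hxS
        · refine ⟨Ps x, fun e he => hE₀EY ?_⟩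
          rw [hE₀def]
          exact Set.mem_biUnion hxS he
        · refine ⟨(((Ps x⁻¹).map fx).copy rfl (smul_inv_smul x t)).reverse, ?_⟩
          intro e he
          rw [Walk.edges_reverse, List.mem_reverse, Walk.edges_copy, Walk.edges_map] at he
          obtain ⟨e₀, he₀, rfl⟩ := List.mem_map.mp he
          refine hEYinv x e₀ (hE₀EY ?_)
          rw [hE₀def]
          exact Set.mem_biUnion hxS he₀
      refine ⟨w₁.append ((w'.map fx).copy rfl (by rw [List.prod_cons, mul_smul]; rfl)), ?_⟩
      intro e he
      rw [Walk.edges_append, List.mem_append] at he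
      rcases he with he | he
      · exact hw₁ e he
      · rw [Walk.edges_copy, Walk.edges_map] at he
        obtain ⟨e₀, he₀, rfl⟩ := List.mem_map.mp he
        exact hEYinv x e₀ (hw' e₀ he₀)
  -- finiteness of orbit balls
  have hball : ∀ r : ℕ, {h : G | T.dist t (h • t) ≤ r}.Finite := by
    intro r
    have himg : (fun h : G => h • t) '' {h : G | T.dist t (h • t) ≤ r} ⊆ reachSet EY t r := by
      rintro z ⟨h, hh, rfl⟩
      obtain ⟨l, hl, hlp, -⟩ := wl_spec S hgen h
      subst hlp
      obtain ⟨w, hw⟩ := hwordwalk l hl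
      have hbp : w.bypass.IsPath := w.bypass_isPath
      have hblen : w.bypass.length = T.dist t (l.prod • t) := aux_path_length_eq_dist hT _ hbp
      have hbe : ∀ e ∈ w.bypass.edges, e ∈ EY := fun e he => hw e (w.edges_bypass_subset he)
      have hr := reach_walk EY t w.bypass 0 (by simp [reachSet]) hbe
      rw [zero_add, hblen] at hr
      exact reach_mono EY t hh hr
    have hinj : Set.InjOn (fun h : G => h • t) {h : G | T.dist t (h • t) ≤ r} :=
      fun h₁ _ h₂ _ hr => hfree' h₁ h₂ t htTG hr
    exact Set.Finite.of_finite_image ((reach_finite EY t hnbr r).subset himg) hinj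
  -- the constant N
  have hB'fin := hball (2 * R + 1)
  set N := hB'fin.toFinset.sup (wordLength S) with hNdef
  have hNle : ∀ h : G, T.dist t (h • t) ≤ 2 * R + 1 → wordLength S h ≤ N :=
    fun h hh => Finset.le_sup (hB'fin.mem_toFinset.mpr hh)
  -- Švarc–Milnor type bound
  have hSM : ∀ g : G, wordLength S g ≤ T.dist t (g • t) * N := by
    intro g
    by_cases hzero : T.dist t (g • t) = 0
    · have heq : t = g • t := (hT.isConnected.dist_eq_zero_iff).mp hzero
      have : g = 1 := hfree g t htTG heq.symm
      simp [this, wl_one]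
    obtain ⟨γ₀, hγ₀len⟩ := hT.isConnected.exists_walk_length_eq_dist t (g • t)
    set L := T.dist t (g • t) with hLdef
    set γ := γ₀.bypass with hγdef
    have hγpath : γ.IsPath := γ₀.bypass_isPath
    have hγlen : γ.length = L := aux_path_length_eq_dist hT γ hγpath
    have hγTG : ∀ j, j ≤ L → γ.getVert j ∈ TG := by
      intro j hj
      exact hTG.2 htTG (hTGmem g t htTG) γ hγpath _
        (Walk.mem_support_iff_exists_getVert.mpr ⟨j, rfl, by omega⟩)
    set gj : ℕ → G := fun j =>
      if h0 : j = 0 then 1 else if hL : L ≤ j then g else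
        (hcoarse (γ.getVert j) (hγTG j (by omega))).choose with hgjdef
    have hgj : ∀ j ≤ L, T.dist (γ.getVert j) (gj j • t) ≤ R := by
      intro j hj
      by_cases h0 : j = 0
      · subst h0
        have hgj0' : gj 0 = 1 := by simp [hgjdef]
        rw [hgj0', one_smul, Walk.getVert_zero, SimpleGraph.dist_self]
        exact Nat.zero_le R
      by_cases hL : L ≤ j
      · have hjL : j = L := le_antisymm hj hL
        have hgLg : gj j = g := by
          rw [hgjdef]
          simp only [dif_neg h0, dif_pos hL]
        have hvert : γ.getVert j = g • t := by
          rw [hjL, show L = γ.length from hγlen.symm, Walk.getVert_length]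
        rw [hgLg, hvert, SimpleGraph.dist_self]
        exact Nat.zero_le R
      · rw [hgjdef]
        simp only [dif_neg h0, dif_neg hL]
        exact (hcoarse (γ.getVert j) (hγTG j (by omega))).choose_spec
    have hgap : ∀ j, j < L → T.dist t (((gj j)⁻¹ * gj (j + 1)) • t) ≤ 2 * R + 1 := by
      intro j hjL
      have h1 : T.dist t (((gj j)⁻¹ * gj (j + 1)) • t) =
          T.dist (gj j • t) (gj (j + 1) • t) := by
        rw [← hdistT (gj j) t (((gj j)⁻¹ * gj (j + 1)) • t), smul_smul, mul_inv_cancel_left]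
      have h2 : T.Adj (γ.getVert j) (γ.getVert (j + 1)) := γ.adj_getVert_succ (by omega)
      have h3 : T.dist (γ.getVert j) (γ.getVert (j + 1)) ≤ 1 := by
        simpa using SimpleGraph.dist_le (Walk.cons h2 Walk.nil)
      have h4 := hgj j (by omega)
      have h5 := hgj (j + 1) (by omega)
      have h6 := hT.isConnected.dist_triangle (u := gj j • t) (v := γ.getVert j)
        (w := gj (j + 1) • t)
      have h7 := hT.isConnected.dist_triangle (u := γ.getVert j) (v := γ.getVert (j + 1))
        (w := gj (j + 1) • t)
      have h8 : T.dist (gj j • t) (γ.getVert j) = T.dist (γ.getVert j) (gj j • t) :=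
        SimpleGraph.dist_comm
      omega
    have hgj0 : gj 0 = 1 := by simp [hgjdef]
    have hgjL : gj L = g := by
      have hL0 : ¬ L = 0 := by simpa [hLdef] using hzero
      rw [hgjdef]
      simp only [dif_neg hL0, dif_pos le_rfl]
    have hprod := aux_telescope gj L
    rw [hgj0, hgjL, inv_one, one_mul] at hprod
    calc wordLength S g
        = wordLength S ((List.range L).map (fun j => (gj j)⁻¹ * gj (j + 1))).prod := by
          rw [hprod]
      _ ≤ (((List.range L).map (fun j => (gj j)⁻¹ * gj (j + 1))).map (wordLength S)).sum :=
          wl_prod_le S hgen _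
      _ ≤ (((List.range L).map (fun j => (gj j)⁻¹ * gj (j + 1))).map (wordLength S)).length • N := by
          refine List.sum_le_card_nsmul _ N ?_
          intro x hx
          rw [List.mem_map] at hx
          obtain ⟨y, hy, rfl⟩ := hx
          rw [List.mem_map] at hy
          obtain ⟨j, hj, rfl⟩ := hy
          exact hNle _ (hgap j (List.mem_range.mp hj))
      _ = L * N := by simp [smul_eq_mul]
  -- easy direction
  set M := S.sup (fun s => 𝒞.dist u₀ (s • u₀)) with hMdef
  have hMle : ∀ x : G, (x ∈ S ∨ x⁻¹ ∈ S) → 𝒞.dist u₀ (x • u₀) ≤ M := by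
    intro x hx
    rcases hx with hxS | hxS
    · exact Finset.le_sup (f := fun s => 𝒞.dist u₀ (s • u₀)) hxS
    · have h1 : 𝒞.dist u₀ (x • u₀) = 𝒞.dist (x⁻¹ • u₀) u₀ := by
        rw [← hdistC x⁻¹ u₀ (x • u₀), inv_smul_smul]
      rw [h1, SimpleGraph.dist_comm]
      exact Finset.le_sup (f := fun s => 𝒞.dist u₀ (s • u₀)) hxS
  have hlist : ∀ l : List G, (∀ x ∈ l, x ∈ S ∨ x⁻¹ ∈ S) →
      𝒞.dist u₀ (l.prod • u₀) ≤ M * l.length := by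
    intro l hl
    induction l with
    | nil => simp
    | cons x l' ih =>
      have h1 := hT
      have htri := h𝒞conn.dist_triangle (u := u₀) (v := x • u₀) (w := (x :: l').prod • u₀)
      have h2 : 𝒞.dist (x • u₀) ((x :: l').prod • u₀) = 𝒞.dist u₀ (l'.prod • u₀) := by
        rw [List.prod_cons, mul_smul, hdistC]
      have h3 := ih (fun y hy => hl y (List.mem_cons_of_mem _ hy))
      have h4 := hMle x (hl x List.mem_cons_self)
      rw [h2] at htri
      simp only [List.length_cons]
      calc 𝒞.dist u₀ ((x :: l').prod • u₀) ≤ 𝒞.dist u₀ (x • u₀) + 𝒞.dist u₀ (l'.prod • u₀) :=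
            htri
        _ ≤ M + M * l'.length := Nat.add_le_add h4 h3
        _ = M * (l'.length + 1) := by ring
  have hdir2 : ∀ g : G, 𝒞.dist u₀ (g • u₀) ≤ M * wordLength S g := by
    intro g
    obtain ⟨l, hl, hlp, hlen⟩ := wl_spec S hgen g
    have hx := hlist l hl
    rw [hlp, hlen] at hx
    exact hx
  -- assemble
  refine ⟨(((D + 1) * N + M + 1 : ℕ) : ℝ), (((D + 1) * N + M + 1 : ℕ) : ℝ), ?_, ?_, ?_⟩
  · exact_mod_cast Nat.succ_le_of_lt (Nat.pos_of_ne_zero (by omega)) |>.trans_lt' (by norm_num) |>.le.lt_of_ne' (by norm_num)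
  · positivity
  intro g
  have hnat1 : wordLength S g ≤ ((D + 1) * N + M + 1) * 𝒞.dist u₀ (g • u₀) +
      ((D + 1) * N + M + 1) := by
    have h1 := hSM g
    have h2 := hLbound g
    have h3 : T.dist t (g • t) * N ≤ ((𝒞.dist u₀ (g • u₀) + 1) * (D + 1)) * N := by
      have : T.dist t (g • t) ≤ (𝒞.dist u₀ (g • u₀) + 1) * (D + 1) := by omega
      exact Nat.mul_le_mul_right _ this
    calc wordLength S g ≤ T.dist t (g • t) * N := h1
      _ ≤ ((𝒞.dist u₀ (g • u₀) + 1) * (D + 1)) * N := h3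
      _ ≤ ((D + 1) * N + M + 1) * 𝒞.dist u₀ (g • u₀) + ((D + 1) * N + M + 1) := by
          ring_nf
          nlinarith [Nat.zero_le M, Nat.zero_le (𝒞.dist u₀ (g • u₀))]
  have hnat2 : 𝒞.dist u₀ (g • u₀) ≤ ((D + 1) * N + M + 1) * wordLength S g +
      ((D + 1) * N + M + 1) := by
    have h1 := hdir2 g
    nlinarith [Nat.zero_le ((D + 1) * N), Nat.zero_le (wordLength S g)]
  constructor
  · exact_mod_cast hnat1
  · exact_mod_cast hnat2
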